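/- Let χ be a quartic Dirichlet character modulo 5 (i.e. χ has exact order 4), and let ψ = χ² be the quadratic character modulo 5. Then for every integer n ≥ 0, ∑_{j=0}^{n} δ_χ(j)·δ_χ(n−j) = −((4 + 3χ(2))/10)·σ̃_5(n) + ((2 + χ(2))/2)·σ̂_5(n), where σ̃_5(0) = −1/5 and σ̂_5(0) = 0. -/

import Mathlib

open Finset

/-- `δ_χ(n) = ∑_{0<d∣n} χ(d)` for `n ≥ 1`, and
`δ_χ(0) = −(1/(2N)) ∑_{a=1}^{N−1} χ(a)·a`. -/
noncomputable def deltaChar {N : ℕ} (χ : DirichletCharacter ℂ N) (n : ℕ) : ℂ :=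
  if n = 0 then -(1 / (2 * (N : ℂ))) * ∑ a ∈ Finset.range N, χ a * a
  else ∑ d ∈ n.divisors, χ d

/-- `σ̃_p(n) = ∑_{0<d∣n} ψ(d)·d` for `n ≥ 1`, with prescribed value `c` at `n = 0`. -/
noncomputable def sigmaTilde {N : ℕ} (ψ : DirichletCharacter ℂ N) (c : ℂ) (n : ℕ) : ℂ :=
  if n = 0 then c else ∑ d ∈ n.divisors, ψ d * d

/-- `σ̂_p(n) = ∑_{0<d∣n} ψ(d)·(n/d)` for `n ≥ 1`, and `σ̂_p(0) = 0`. -/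
noncomputable def sigmaHat {N : ℕ} (ψ : DirichletCharacter ℂ N) (n : ℕ) : ℂ :=
  if n = 0 then 0 else ∑ d ∈ n.divisors, ψ d * ((n / d : ℕ) : ℂ)

/-! ### Auxiliary Gaussian-integer tables -/

abbrev GI := GaussianInt

def chiG : ZMod 5 → GI := ![0, 1, ⟨0,1⟩, ⟨0,-1⟩, -1]
def psiG : ZMod 5 → GI := ![0, 1, -1, -1, 1]
def BG : ZMod 5 → ZMod 5 → GI :=
  ![![⟨0,0⟩, ⟨-2,-1⟩, ⟨2,1⟩, ⟨2,1⟩, ⟨-2,-1⟩],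
    ![⟨-2,-1⟩, ⟨0,-1⟩, ⟨0,1⟩, ⟨0,-1⟩, ⟨-2,-1⟩],
    ![⟨2,1⟩, ⟨0,1⟩, ⟨0,1⟩, ⟨2,1⟩, ⟨0,-1⟩],
    ![⟨2,1⟩, ⟨0,-1⟩, ⟨2,1⟩, ⟨0,1⟩, ⟨0,1⟩],
    ![⟨-2,-1⟩, ⟨-2,-1⟩, ⟨0,-1⟩, ⟨0,1⟩, ⟨0,-1⟩]]

theorem K1 : ∀ r s : ZMod 5, BG r s = 2 * (chiG r * chiG s) + BG r (s - r) := by decide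
theorem K1' : ∀ r s : ZMod 5, BG r s = 2 * (chiG r * chiG s) + BG (r - s) s := by decide
theorem K2 : ∀ r : ZMod 5, BG r r = 2 * (chiG r * chiG r) - psiG r * ⟨2,1⟩ := by decide
theorem K4 : ∀ r : ZMod 5, psiG r = chiG r * chiG r := by decide
theorem K5 : ∀ ρ : ZMod 5,
    BG ρ 0 + BG (ρ+1) 4 + BG (ρ+2) 3 + BG (ρ+3) 2 + BG (ρ+4) 1
    = (⟨-4,-3⟩ : GI) * psiG ρ := by decide

noncomputable def eG (z : ℂ) (w : GI) : ℂ := (w.re : ℂ) + (w.im : ℂ) * z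

theorem eG_mul {z : ℂ} (hz : z ^ 2 = -1) (x y : GI) :
    eG z (x * y) = eG z x * eG z y := by
  simp only [eG, Zsqrtd.re_mul, Zsqrtd.im_mul]; push_cast
  linear_combination (-(x.im : ℂ) * (y.im : ℂ)) * hz

theorem eG_add (z : ℂ) (x y : GI) : eG z (x + y) = eG z x + eG z y := by
  simp only [eG, Zsqrtd.re_add, Zsqrtd.im_add]; push_cast; ring

theorem eG_sub (z : ℂ) (x y : GI) : eG z (x - y) = eG z x - eG z y := by
  simp only [eG, Zsqrtd.re_sub, Zsqrtd.im_sub]; push_cast; ring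

theorem eG_bit (z : ℂ) (a b : ℤ) : eG z ⟨a, b⟩ = a + b * z := rfl

theorem eG_two (z : ℂ) : eG z 2 = 2 := by
  simp [eG, show ((2:GI).re = 2) from rfl, show ((2:GI).im = 0) from rfl]

theorem cast5 : ((5 : ℕ) : ZMod 5) = 0 := by decide

theorem K5e {z : ℂ} (hz : z ^ 2 = -1) (ρ : ZMod 5) :
    eG z (BG ρ 0) + eG z (BG (ρ+1) 4) + eG z (BG (ρ+2) 3)
      + eG z (BG (ρ+3) 2) + eG z (BG (ρ+4) 1)
    = (-4 - 3 * z) * eG z (psiG ρ) := by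
  have h := congrArg (eG z) (K5 ρ)
  rw [eG_add, eG_add, eG_add, eG_add, eG_mul hz] at h
  have hb : eG z (⟨-4,-3⟩ : GI) = -4 - 3 * z := by rw [eG_bit]; push_cast; ring
  simp only [eG] at h hb ⊢
  linear_combination h + ((((psiG ρ).re : ℂ)) + ((psiG ρ).im : ℂ) * z) * hb

/-! ### Character values -/

theorem hc2' (χ : DirichletCharacter ℂ 5) (hχ : orderOf χ = 4) : (χ 2)^2 = -1 := by
  have h4 : (χ 2)^4 = 1 := by rw [← map_pow, show ((2:ZMod 5)^4 = 1) by decide, map_one]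
  have hv3 : χ 3 = (χ 2)^3 := by rw [← map_pow, show ((2:ZMod 5)^3 = 3) by decide]
  have hv4 : χ 4 = (χ 2)^2 := by rw [← map_pow, show ((2:ZMod 5)^2 = 4) by decide]
  rcases mul_self_eq_one_iff.mp (show (χ 2)^2 * (χ 2)^2 = 1 by rw [← pow_add]; exact h4)
    with h | h
  · exfalso
    have hsq : χ ^ 2 = 1 := by
      ext a
      rw [MulChar.one_apply_coe, pow_two, MulChar.mul_apply]
      rcases (show (a : ZMod 5) = 1 ∨ (a : ZMod 5) = 2 ∨ (a : ZMod 5) = 3 ∨ (a : ZMod 5) = 4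
        by revert a; decide) with ha | ha | ha | ha <;> rw [ha]
      · rw [map_one]; ring
      · rw [← pow_two]; exact h
      · rw [hv3, ← pow_add]
        calc (χ 2)^6 = ((χ 2)^2)^3 := by ring
        _ = 1 := by rw [h]; ring
      · rw [hv4, ← pow_add]
        calc (χ 2)^4 = ((χ 2)^2)^2 := by ring
        _ = 1 := by rw [h]; ring
    have := hχ ▸ orderOf_dvd_of_pow_eq_one hsq
    rw [Nat.dvd_prime Nat.prime_two] at this
    omega
  · exact h

theorem chi_eval (χ : DirichletCharacter ℂ 5) (hχ : orderOf χ = 4) :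
    ∀ x : ZMod 5, χ x = eG (χ 2) (chiG x) := by
  have hc2 : (χ 2)^2 = -1 := hc2' χ hχ
  have hv3 : χ 3 = (χ 2)^3 := by rw [← map_pow, show ((2:ZMod 5)^3 = 3) by decide]
  have hv4 : χ 4 = (χ 2)^2 := by rw [← map_pow, show ((2:ZMod 5)^2 = 4) by decide]
  have h0 : χ 0 = 0 := χ.map_nonunit (by decide)
  intro x
  rcases (show x = 0 ∨ x = 1 ∨ x = 2 ∨ x = 3 ∨ x = 4 by revert x; decide)
    with rfl | rfl | rfl | rfl | rfl
  · rw [h0, show chiG 0 = ⟨0,0⟩ from rfl, eG_bit]; norm_num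
  · rw [map_one, show chiG 1 = ⟨1,0⟩ from rfl, eG_bit]; norm_num
  · rw [show chiG 2 = ⟨0,1⟩ from rfl, eG_bit]; ring
  · rw [hv3, show chiG 3 = ⟨0,-1⟩ from rfl, eG_bit]
    push_cast
    linear_combination (χ 2) * hc2
  · rw [hv4, hc2, show chiG 4 = ⟨-1,0⟩ from rfl, eG_bit]; norm_num

/-! ### The trajectory function `H` -/

noncomputable def Hfun (χ : DirichletCharacter ℂ 5) : ℕ → ℕ → ℂ
  | a, b =>
    if a = 0 ∨ b = 0 then 0
    else χ (a : ZMod 5) * χ (b : ZMod 5) +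
      if a < b then Hfun χ a (b - a)
      else if b < a then Hfun χ (a - b) b
      else 0
termination_by a b => a + b
decreasing_by all_goals omega

theorem Hfun_closed (χ : DirichletCharacter ℂ 5) (hc2 : (χ 2)^2 = -1)
    (hval : ∀ x : ZMod 5, χ x = eG (χ 2) (chiG x)) :
    ∀ N a b : ℕ, a + b ≤ N → 1 ≤ a → 1 ≤ b →
    Hfun χ a b = eG (χ 2) (BG a b) / 2
      + eG (χ 2) (psiG (Nat.gcd a b)) * ((2 + χ 2) / 2) := by
  intro N
  induction N with
  | zero => intro a b h ha hb; omega
  | succ N IH =>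
    intro a b h ha hb
    rw [Hfun]
    rw [if_neg (by omega)]
    rcases lt_trichotomy a b with hab | hab | hab
    · rw [if_pos hab, IH a (b - a) (by omega) ha (by omega)]
      have hg : Nat.gcd a (b - a) = Nat.gcd a b := by
        conv_rhs => rw [show b = b - a + a by omega]
        rw [Nat.gcd_add_self_right]
      have hcast : ((b - a : ℕ) : ZMod 5) = (b : ZMod 5) - (a : ZMod 5) :=
        Nat.cast_sub (le_of_lt hab)
      rw [hg, hcast]
      have hK := congrArg (eG (χ 2)) (K1 (a : ZMod 5) (b : ZMod 5))
      rw [eG_add, eG_mul hc2, eG_mul hc2, eG_two] at hK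
      rw [hval (a : ZMod 5), hval (b : ZMod 5), hK]; ring
    · subst hab
      rw [if_neg (lt_irrefl a), if_neg (lt_irrefl a), Nat.gcd_self]
      have hK := congrArg (eG (χ 2)) (K2 (a : ZMod 5))
      simp only [eG_sub, eG_mul hc2, eG_two, eG_bit] at hK
      rw [hval (a : ZMod 5), hK]; push_cast; ring
    · rw [if_neg (by omega), if_pos hab, IH (a - b) b (by omega) (by omega) hb]
      have hg : Nat.gcd (a - b) b = Nat.gcd a b := by
        conv_rhs => rw [show a = a - b + b by omega]
        rw [Nat.gcd_add_self_left]
      have hcast : ((a - b : ℕ) : ZMod 5) = (a : ZMod 5) - (b : ZMod 5) :=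
        Nat.cast_sub (le_of_lt hab)
      rw [hg, hcast]
      have hK := congrArg (eG (χ 2)) (K1' (a : ZMod 5) (b : ZMod 5))
      rw [eG_add, eG_mul hc2, eG_mul hc2, eG_two] at hK
      rw [hval (a : ZMod 5), hval (b : ZMod 5), hK]; ring
def Qset (n : ℕ) : Finset (ℕ × ℕ × ℕ × ℕ) :=
  ((range (n+1)) ×ˢ (range (n+1)) ×ˢ (range (n+1)) ×ˢ (range (n+1))).filter
    fun p => p.1 * p.2.2.1 + p.2.1 * p.2.2.2 = n ∧ 0 < p.1 ∧ 0 < p.2.1 ∧ 0 < p.2.2.1 ∧ 0 < p.2.2.2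

theorem mem_Qset {n : ℕ} {p : ℕ × ℕ × ℕ × ℕ} :
    p ∈ Qset n ↔ p.1 * p.2.2.1 + p.2.1 * p.2.2.2 = n ∧
      0 < p.1 ∧ 0 < p.2.1 ∧ 0 < p.2.2.1 ∧ 0 < p.2.2.2 := by
  obtain ⟨a, b, x, y⟩ := p
  simp only [Qset, mem_filter, mem_product, mem_range]
  constructor
  · rintro ⟨-, h⟩; exact h
  · rintro ⟨heq, ha, hb, hx, hy⟩
    have h1 : a ≤ a * x := Nat.le_mul_of_pos_right a hx
    have h2 : b ≤ b * y := Nat.le_mul_of_pos_right b hy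
    have h3 : x ≤ a * x := Nat.le_mul_of_pos_left x ha
    have h4 : y ≤ b * y := Nat.le_mul_of_pos_left y hb
    exact ⟨⟨by omega, by omega, by omega, by omega⟩, heq, ha, hb, hx, hy⟩

theorem conv_eq (χ : DirichletCharacter ℂ 5) (n : ℕ) :
    ∑ j ∈ Ico 1 n, (∑ d ∈ Nat.divisors j, χ (d : ZMod 5)) *
        (∑ e ∈ Nat.divisors (n - j), χ (e : ZMod 5))
      = ∑ p ∈ Qset n, χ (p.1 : ZMod 5) * χ (p.2.1 : ZMod 5) := by
  have step1 : ∀ j ∈ Ico 1 n,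
      (∑ d ∈ Nat.divisors j, χ (d : ZMod 5)) * (∑ e ∈ Nat.divisors (n - j), χ (e : ZMod 5))
      = ∑ q ∈ (Nat.divisorsAntidiagonal j) ×ˢ (Nat.divisorsAntidiagonal (n - j)),
          χ (q.1.1 : ZMod 5) * χ (q.2.1 : ZMod 5) := by
    intro j _
    rw [← Nat.sum_divisorsAntidiagonal (fun i _ => χ (i : ZMod 5)) (n := j),
      ← Nat.sum_divisorsAntidiagonal (fun i _ => χ (i : ZMod 5)) (n := n - j),
      Finset.sum_mul_sum, Finset.sum_product]
  rw [Finset.sum_congr rfl step1, Finset.sum_sigma']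
  refine Finset.sum_nbij' (i := fun q => (q.2.1.1, q.2.2.1, q.2.1.2, q.2.2.2))
    (j := fun p => ⟨p.1 * p.2.2.1, ((p.1, p.2.2.1), (p.2.1, p.2.2.2))⟩) ?_ ?_ ?_ ?_ ?_
  · rintro ⟨j, ⟨⟨d, x⟩, ⟨e, y⟩⟩⟩ hq
    simp only [mem_sigma, mem_Ico, mem_product, Nat.mem_divisorsAntidiagonal] at hq
    obtain ⟨⟨hj1, hj2⟩, ⟨hdx, -⟩, ⟨hey, -⟩⟩ := hq
    have hd : 0 < d := by by_contra h; push_neg at h; interval_cases d; omega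
    have hx : 0 < x := by by_contra h; push_neg at h; interval_cases x; omega
    have he : 0 < e := by by_contra h; push_neg at h; interval_cases e; omega
    have hy : 0 < y := by by_contra h; push_neg at h; interval_cases y; omega
    rw [mem_Qset]
    dsimp only
    exact ⟨by omega, hd, he, hx, hy⟩
  · rintro ⟨a, b, x, y⟩ hp
    rw [mem_Qset] at hp
    obtain ⟨heq, ha, hb, hx, hy⟩ := hp
    dsimp only at heq ha hb hx hy
    simp only [mem_sigma, mem_Ico, mem_product, Nat.mem_divisorsAntidiagonal]
    have h1 : 0 < a * x := Nat.mul_pos ha hx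
    have h2 : 0 < b * y := Nat.mul_pos hb hy
    exact ⟨⟨by omega, by omega⟩, ⟨trivial, by omega⟩, by omega, by omega⟩
  · rintro ⟨j, ⟨⟨d, x⟩, ⟨e, y⟩⟩⟩ hq
    simp only [mem_sigma, mem_Ico, mem_product, Nat.mem_divisorsAntidiagonal] at hq
    obtain ⟨⟨hj1, hj2⟩, ⟨hdx, -⟩, ⟨hey, -⟩⟩ := hq
    subst hdx
    rfl
  · rintro ⟨a, b, x, y⟩ _; rfl
  · rintro ⟨j, ⟨⟨d, x⟩, ⟨e, y⟩⟩⟩ _; rfl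
theorem sum_tri {α : Type*} (s : Finset α) (G : α → ℂ) (u v : α → ℕ) :
    ∑ p ∈ s, G p = ∑ p ∈ s.filter (fun p => u p = v p), G p
      + ∑ p ∈ s.filter (fun p => v p < u p), G p
      + ∑ p ∈ s.filter (fun p => u p < v p), G p := by
  have A : (s.filter (fun p => ¬u p = v p)).filter (fun p => v p < u p)
      = s.filter (fun p => v p < u p) := by
    rw [Finset.filter_filter]
    exact Finset.filter_congr (fun p _ => ⟨fun h => h.2, fun h => ⟨by omega, h⟩⟩)
  have B : (s.filter (fun p => ¬u p = v p)).filter (fun p => ¬ v p < u p)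
      = s.filter (fun p => u p < v p) := by
    rw [Finset.filter_filter]
    exact Finset.filter_congr (fun p _ => ⟨fun h => by omega, fun h => ⟨by omega, by omega⟩⟩)
  rw [← Finset.sum_filter_add_sum_filter_not s (fun p => u p = v p) G,
    ← Finset.sum_filter_add_sum_filter_not (s.filter (fun p => ¬ u p = v p))
      (fun p => v p < u p) G, A, B]
  ring

theorem bij_gt (F : ℕ → ℕ → ℂ) (n : ℕ) :
    ∑ p ∈ (Qset n).filter (fun p => p.2.2.2 < p.2.2.1), F p.1 p.2.1
    = ∑ p ∈ (Qset n).filter (fun p => p.1 < p.2.1), F p.1 (p.2.1 - p.1) := by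
  refine Finset.sum_nbij' (i := fun p => (p.1, p.1 + p.2.1, p.2.2.1 - p.2.2.2, p.2.2.2))
    (j := fun p => (p.1, p.2.1 - p.1, p.2.2.1 + p.2.2.2, p.2.2.2)) ?_ ?_ ?_ ?_ ?_
  · rintro ⟨a, b, x, y⟩ hp
    simp only [mem_filter, mem_Qset] at hp ⊢
    obtain ⟨⟨heq, ha, hb, hx, hy⟩, hlt⟩ := hp
    have he2 : a * (x - y) + (a + b) * y = n := by
      zify [show y ≤ x from le_of_lt hlt]
      zify at heq
      linarith [heq]
    exact ⟨⟨he2, ha, by omega, by omega, hy⟩, by omega⟩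
  · rintro ⟨a, b, x, y⟩ hp
    simp only [mem_filter, mem_Qset] at hp ⊢
    obtain ⟨⟨heq, ha, hb, hx, hy⟩, hlt⟩ := hp
    have he2 : a * (x + y) + (b - a) * y = n := by
      zify [show a ≤ b from le_of_lt hlt]
      zify at heq
      linarith [heq]
    exact ⟨⟨he2, ha, by omega, by omega, hy⟩, by omega⟩
  · rintro ⟨a, b, x, y⟩ hp
    simp only [mem_filter, mem_Qset] at hp
    obtain ⟨⟨heq, ha, hb, hx, hy⟩, hlt⟩ := hp
    show (a, a + b - a, x - y + y, y) = (a, b, x, y)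
    rw [show a + b - a = b by omega, show x - y + y = x by omega]
  · rintro ⟨a, b, x, y⟩ hp
    simp only [mem_filter, mem_Qset] at hp
    obtain ⟨⟨heq, ha, hb, hx, hy⟩, hlt⟩ := hp
    show (a, a + (b - a), x + y - y, y) = (a, b, x, y)
    rw [show a + (b - a) = b by omega, show x + y - y = x by omega]
  · rintro ⟨a, b, x, y⟩ hp
    show F a b = F a (a + b - a)
    rw [show a + b - a = b by omega]

theorem bij_lt (F : ℕ → ℕ → ℂ) (n : ℕ) :
    ∑ p ∈ (Qset n).filter (fun p => p.2.2.1 < p.2.2.2), F p.1 p.2.1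
    = ∑ p ∈ (Qset n).filter (fun p => p.2.1 < p.1), F (p.1 - p.2.1) p.2.1 := by
  refine Finset.sum_nbij' (i := fun p => (p.1 + p.2.1, p.2.1, p.2.2.1, p.2.2.2 - p.2.2.1))
    (j := fun p => (p.1 - p.2.1, p.2.1, p.2.2.1, p.2.2.2 + p.2.2.1)) ?_ ?_ ?_ ?_ ?_
  · rintro ⟨a, b, x, y⟩ hp
    simp only [mem_filter, mem_Qset] at hp ⊢
    obtain ⟨⟨heq, ha, hb, hx, hy⟩, hlt⟩ := hp
    have he2 : (a + b) * x + b * (y - x) = n := by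
      zify [show x ≤ y from le_of_lt hlt]
      zify at heq
      linarith [heq]
    exact ⟨⟨he2, by omega, hb, hx, by omega⟩, by omega⟩
  · rintro ⟨a, b, x, y⟩ hp
    simp only [mem_filter, mem_Qset] at hp ⊢
    obtain ⟨⟨heq, ha, hb, hx, hy⟩, hlt⟩ := hp
    have he2 : (a - b) * x + b * (y + x) = n := by
      zify [show b ≤ a from le_of_lt hlt]
      zify at heq
      linarith [heq]
    exact ⟨⟨he2, by omega, hb, hx, by omega⟩, by omega⟩
  · rintro ⟨a, b, x, y⟩ hp
    simp only [mem_filter, mem_Qset] at hp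
    obtain ⟨⟨heq, ha, hb, hx, hy⟩, hlt⟩ := hp
    show (a + b - b, b, x, y - x + x) = (a, b, x, y)
    rw [show a + b - b = a by omega, show y - x + x = y by omega]
  · rintro ⟨a, b, x, y⟩ hp
    simp only [mem_filter, mem_Qset] at hp
    obtain ⟨⟨heq, ha, hb, hx, hy⟩, hlt⟩ := hp
    show (a - b + b, b, x, y + x - x) = (a, b, x, y)
    rw [show a - b + b = a by omega, show y + x - x = y by omega]
  · rintro ⟨a, b, x, y⟩ hp
    show F a b = F (a + b - b) b
    rw [show a + b - b = a by omega]

theorem key1 (F : ℕ → ℕ → ℂ) (n : ℕ) :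
    ∑ p ∈ Qset n, F p.1 p.2.1
    = ∑ p ∈ (Qset n).filter (fun p => p.2.2.1 = p.2.2.2), F p.1 p.2.1
      + ∑ p ∈ Qset n, (if p.1 < p.2.1 then F p.1 (p.2.1 - p.1)
          else if p.2.1 < p.1 then F (p.1 - p.2.1) p.2.1 else 0) := by
  have h1 := sum_tri (Qset n) (fun p => F p.1 p.2.1) (fun p => p.2.2.1) (fun p => p.2.2.2)
  have h2 := sum_tri (Qset n)
    (fun p => (if p.1 < p.2.1 then F p.1 (p.2.1 - p.1)
      else if p.2.1 < p.1 then F (p.1 - p.2.1) p.2.1 else 0))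
    (fun p => p.1) (fun p => p.2.1)
  rw [h1, h2]
  have e0 : ∑ p ∈ (Qset n).filter (fun p => p.1 = p.2.1),
      (if p.1 < p.2.1 then F p.1 (p.2.1 - p.1)
        else if p.2.1 < p.1 then F (p.1 - p.2.1) p.2.1 else 0) = 0 := by
    refine Finset.sum_eq_zero ?_
    intro p hp
    simp only [mem_filter] at hp
    rw [if_neg (by omega), if_neg (by omega)]
  have e1 : ∑ p ∈ (Qset n).filter (fun p => p.2.1 < p.1),
      (if p.1 < p.2.1 then F p.1 (p.2.1 - p.1)
        else if p.2.1 < p.1 then F (p.1 - p.2.1) p.2.1 else 0)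
      = ∑ p ∈ (Qset n).filter (fun p => p.2.1 < p.1), F (p.1 - p.2.1) p.2.1 := by
    refine Finset.sum_congr rfl ?_
    intro p hp
    simp only [mem_filter] at hp
    rw [if_neg (by omega), if_pos hp.2]
  have e2 : ∑ p ∈ (Qset n).filter (fun p => p.1 < p.2.1),
      (if p.1 < p.2.1 then F p.1 (p.2.1 - p.1)
        else if p.2.1 < p.1 then F (p.1 - p.2.1) p.2.1 else 0)
      = ∑ p ∈ (Qset n).filter (fun p => p.1 < p.2.1), F p.1 (p.2.1 - p.1) := by
    refine Finset.sum_congr rfl ?_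
    intro p hp
    simp only [mem_filter] at hp
    rw [if_pos hp.2]
  rw [e0, e1, e2, bij_gt F n, bij_lt F n]
  ring
theorem L_D (G : ℕ → ℕ → ℂ) (n : ℕ) (hn : 1 ≤ n) :
    ∑ p ∈ (Qset n).filter (fun p => p.2.2.1 = p.2.2.2), G p.1 p.2.1
    = ∑ q ∈ (n.divisors).sigma (fun e => Ico 1 e), G q.2 (q.1 - q.2) := by
  refine (Finset.sum_nbij' (i := fun q => (q.2, q.1 - q.2, n / q.1, n / q.1))
    (j := fun p => ⟨p.1 + p.2.1, p.1⟩) ?_ ?_ ?_ ?_ ?_).symm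
  · rintro ⟨e, a⟩ hq
    simp only [mem_sigma, Nat.mem_divisors, mem_Ico] at hq
    obtain ⟨⟨hdvd, -⟩, ha1, ha2⟩ := hq
    have hx : 0 < n / e := Nat.div_pos (Nat.le_of_dvd (by omega) hdvd) (by omega)
    simp only [mem_filter, mem_Qset]
    refine ⟨⟨?_, ha1, by omega, hx, hx⟩, trivial⟩
    rw [← Nat.add_mul, show a + (e - a) = e by omega]
    exact Nat.mul_div_cancel' hdvd
  · rintro ⟨a, b, x, y⟩ hp
    simp only [mem_filter, mem_Qset] at hp
    obtain ⟨⟨heq, ha, hb, hx, hy⟩, hxy⟩ := hp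
    subst hxy
    simp only [mem_sigma, Nat.mem_divisors, mem_Ico]
    have heq2 : (a + b) * x = n := by rw [Nat.add_mul]; omega
    exact ⟨⟨⟨x, heq2.symm⟩, by omega⟩, ha, by omega⟩
  · rintro ⟨e, a⟩ hq
    simp only [mem_sigma, Nat.mem_divisors, mem_Ico] at hq
    obtain ⟨⟨hdvd, -⟩, ha1, ha2⟩ := hq
    show (⟨a + (e - a), a⟩ : (_ : ℕ) × ℕ) = ⟨e, a⟩
    rw [show a + (e - a) = e by omega]
  · rintro ⟨a, b, x, y⟩ hp
    simp only [mem_filter, mem_Qset] at hp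
    obtain ⟨⟨heq, ha, hb, hx, hy⟩, hxy⟩ := hp
    subst hxy
    have heq2 : (a + b) * x = n := by rw [Nat.add_mul]; omega
    show (a, a + b - a, n / (a + b), n / (a + b)) = (a, b, x, x)
    rw [show a + b - a = b by omega, ← heq2, Nat.mul_div_cancel_left x (by omega)]
  · rintro ⟨e, a⟩ _
    rfl

theorem gcd_sum (e : ℕ) (f : ℕ → ℂ) :
    ∑ a ∈ range e, f (Nat.gcd e a) = ∑ d ∈ e.divisors, (Nat.totient (e / d) : ℂ) * f d := by
  rcases Nat.eq_zero_or_pos e with rfl | he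
  · simp
  rw [← Finset.sum_fiberwise_of_maps_to (g := fun a => Nat.gcd e a) (t := e.divisors)
    (fun x _ => Nat.mem_divisors.2 ⟨Nat.gcd_dvd_left e x, by omega⟩)]
  refine Finset.sum_congr rfl ?_
  intro d hd
  have : ∀ a ∈ (range e).filter (fun a => Nat.gcd e a = d), f (Nat.gcd e a) = f d := by
    intro a ha
    rw [(Finset.mem_filter.1 ha).2]
  rw [Finset.sum_congr rfl this, Finset.sum_const, nsmul_eq_mul,
    ← Nat.totient_div_of_dvd (Nat.dvd_of_mem_divisors hd)]

theorem div_swap (f : ℕ → ℂ) (n : ℕ) (hn : n ≠ 0) :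
    ∑ e ∈ n.divisors, ∑ d ∈ e.divisors, (Nat.totient (e / d) : ℂ) * f d
    = ∑ d ∈ n.divisors, f d * ((n / d : ℕ) : ℂ) := by
  have h1 : ∀ e ∈ n.divisors, ∑ d ∈ e.divisors, (Nat.totient (e / d) : ℂ) * f d
      = ∑ q ∈ e.divisorsAntidiagonal, (Nat.totient q.2 : ℂ) * f q.1 := by
    intro e _
    rw [Nat.sum_divisorsAntidiagonal (fun d m => (Nat.totient m : ℂ) * f d)]
  rw [Finset.sum_congr rfl h1,
    ← Nat.sum_divisorsAntidiagonal
      (fun e x => ∑ q ∈ e.divisorsAntidiagonal, (Nat.totient q.2 : ℂ) * f q.1) (n := n)]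
  rw [Finset.sum_sigma']
  have h2 : ∑ q ∈ (n.divisorsAntidiagonal).sigma (fun p => Nat.divisorsAntidiagonal p.1),
        (Nat.totient q.2.2 : ℂ) * f q.2.1
      = ∑ q ∈ (n.divisorsAntidiagonal).sigma (fun p => Nat.divisorsAntidiagonal p.2),
        (Nat.totient q.2.1 : ℂ) * f q.1.1 := by
    refine Finset.sum_nbij' (i := fun q => ⟨(q.2.1, q.2.2 * q.1.2), (q.2.2, q.1.2)⟩)
      (j := fun q => ⟨(q.1.1 * q.2.1, q.2.2), (q.1.1, q.2.1)⟩) ?_ ?_ ?_ ?_ ?_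
    · rintro ⟨⟨e, x⟩, ⟨d, m⟩⟩ hq
      simp only [mem_sigma, Nat.mem_divisorsAntidiagonal] at hq ⊢
      obtain ⟨⟨hex, -⟩, ⟨hdm, he0⟩⟩ := hq
      constructor
      · constructor
        · rw [← mul_assoc, hdm, hex]
        · exact hn
      · refine ⟨trivial, ?_⟩
        intro h0
        rcases Nat.mul_eq_zero.1 h0 with h0 | h0 <;> subst h0 <;> simp_all
    · rintro ⟨⟨d, k⟩, ⟨m, x⟩⟩ hq
      simp only [mem_sigma, Nat.mem_divisorsAntidiagonal] at hq ⊢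
      obtain ⟨⟨hdk, -⟩, ⟨hmx, hk0⟩⟩ := hq
      constructor
      · constructor
        · rw [mul_assoc, hmx, hdk]
        · exact hn
      · refine ⟨trivial, ?_⟩
        intro h0
        rcases Nat.mul_eq_zero.1 h0 with h0 | h0 <;> subst h0 <;> simp_all
    · rintro ⟨⟨e, x⟩, ⟨d, m⟩⟩ hq
      simp only [mem_sigma, Nat.mem_divisorsAntidiagonal] at hq
      obtain ⟨⟨hex, -⟩, ⟨hdm, he0⟩⟩ := hq
      show (⟨(d * m, x), (d, m)⟩ : (p : ℕ × ℕ) × ℕ × ℕ) = ⟨(e, x), (d, m)⟩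
      rw [hdm]
    · rintro ⟨⟨d, k⟩, ⟨m, x⟩⟩ hq
      simp only [mem_sigma, Nat.mem_divisorsAntidiagonal] at hq
      obtain ⟨⟨hdk, -⟩, ⟨hmx, hk0⟩⟩ := hq
      show (⟨(d, m * x), (m, x)⟩ : (p : ℕ × ℕ) × ℕ × ℕ) = ⟨(d, k), (m, x)⟩
      rw [hmx]
    · rintro ⟨⟨e, x⟩, ⟨d, m⟩⟩ _
      rfl
  rw [h2, Finset.sum_sigma]
  have h3 : ∀ q ∈ n.divisorsAntidiagonal,
      ∑ r ∈ Nat.divisorsAntidiagonal q.2, (Nat.totient r.1 : ℂ) * f q.1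
      = f q.1 * (q.2 : ℂ) := by
    intro q hq
    rw [← Finset.sum_mul, mul_comm]
    congr 1
    rw [Nat.sum_divisorsAntidiagonal (fun m x => (Nat.totient m : ℂ))]
    rw [← Nat.cast_sum]
    rw [Nat.sum_totient]
  rw [Finset.sum_congr rfl h3]
  rw [Nat.sum_divisorsAntidiagonal (fun d k => f d * (k : ℂ))]
theorem beta_sum {z : ℂ} (hz : z ^ 2 = -1) :
    ∀ e : ℕ, 1 ≤ e →
    ∑ a ∈ Ico 1 e, eG z (BG (a : ZMod 5) ((e - a : ℕ) : ZMod 5))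
    = eG z (psiG (e : ZMod 5)) * (-((4 + 3 * z) / 5) * (e : ℂ) + (2 + z))
      - ((6 + 2 * z) / 5) * eG z (chiG (e : ZMod 5)) := by
  intro e
  induction e using Nat.strong_induction_on with
  | _ e IH =>
    intro he
    by_cases h5 : e ≤ 5
    · have c2 : ((2:ℕ) : ZMod 5) = 2 := by decide
      have c3 : ((3:ℕ) : ZMod 5) = 3 := by decide
      have c4 : ((4:ℕ) : ZMod 5) = 4 := by decide
      interval_cases e
      · simp only [show Ico 1 1 = (∅ : Finset ℕ) from rfl, Finset.sum_empty, Nat.cast_one]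
        rw [show psiG 1 = ⟨1,0⟩ from by decide, show chiG 1 = ⟨1,0⟩ from by decide, eG_bit]
        push_cast; ring
      · rw [show Ico 1 2 = ({1} : Finset ℕ) from rfl, Finset.sum_singleton]
        simp only [Nat.cast_one, c2, c3, c4, cast5]
        norm_num
        rw [show BG 1 1 = (⟨0,-1⟩ : GI) from by decide,
          show psiG 2 = (⟨-1,0⟩ : GI) from by decide,
          show chiG 2 = (⟨0,1⟩ : GI) from by decide]
        simp only [eG_bit]
        push_cast; linear_combination ((2:ℂ)/5) * hz
      · rw [show Ico 1 3 = ({1, 2} : Finset ℕ) from rfl, Finset.sum_insert (by decide),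
          Finset.sum_singleton]
        simp only [Nat.cast_one, c2, c3, c4, cast5]
        norm_num
        rw [show BG 1 2 = (⟨0,1⟩ : GI) from by decide,
          show BG 2 1 = (⟨0,1⟩ : GI) from by decide,
          show psiG 3 = (⟨-1,0⟩ : GI) from by decide,
          show chiG 3 = (⟨0,-1⟩ : GI) from by decide]
        simp only [eG_bit]
        push_cast; linear_combination (-(2:ℂ)/5) * hz
      · rw [show Ico 1 4 = ({1, 2, 3} : Finset ℕ) from rfl, Finset.sum_insert (by decide),
          Finset.sum_insert (by decide), Finset.sum_singleton]
        simp only [Nat.cast_one, c2, c3, c4, cast5]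
        norm_num
        rw [show BG 1 3 = (⟨0,-1⟩ : GI) from by decide,
          show BG 2 2 = (⟨0,1⟩ : GI) from by decide,
          show BG 3 1 = (⟨0,-1⟩ : GI) from by decide,
          show psiG 4 = (⟨1,0⟩ : GI) from by decide,
          show chiG 4 = (⟨-1,0⟩ : GI) from by decide]
        simp only [eG_bit]
        push_cast; ring
      · rw [show Ico 1 5 = ({1, 2, 3, 4} : Finset ℕ) from rfl, Finset.sum_insert (by decide),
          Finset.sum_insert (by decide), Finset.sum_insert (by decide), Finset.sum_singleton]
        simp only [Nat.cast_one, c2, c3, c4, cast5]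
        norm_num
        rw [show BG 1 4 = (⟨-2,-1⟩ : GI) from by decide,
          show BG 2 3 = (⟨2,1⟩ : GI) from by decide,
          show BG 3 2 = (⟨2,1⟩ : GI) from by decide,
          show BG 4 1 = (⟨-2,-1⟩ : GI) from by decide,
          show psiG 0 = (⟨0,0⟩ : GI) from by decide,
          show chiG 0 = (⟨0,0⟩ : GI) from by decide]
        simp only [eG_bit]
        push_cast; ring
    · obtain ⟨m, rfl⟩ : ∃ m, e = m + 5 := ⟨e - 5, by omega⟩
      have hm : 1 ≤ m := by omega
      have hcastm : ((m + 5 : ℕ) : ZMod 5) = (m : ZMod 5) := by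
        rw [Nat.cast_add, cast5, add_zero]
      have hsplit := (Finset.sum_Ico_consecutive
        (fun a => eG z (BG (a : ZMod 5) ((m + 5 - a : ℕ) : ZMod 5)))
        (by omega : 1 ≤ m) (by omega : m ≤ m + 5)).symm
      rw [hsplit]
      have hpart1 : ∑ a ∈ Ico 1 m, eG z (BG (a : ZMod 5) ((m + 5 - a : ℕ) : ZMod 5))
          = ∑ a ∈ Ico 1 m, eG z (BG (a : ZMod 5) ((m - a : ℕ) : ZMod 5)) := by
        refine Finset.sum_congr rfl ?_
        intro a ha
        simp only [mem_Ico] at ha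
        congr 2
        rw [Nat.cast_sub (by omega), Nat.cast_sub (by omega), hcastm]
      have hpart2 : ∑ a ∈ Ico m (m + 5), eG z (BG (a : ZMod 5) ((m + 5 - a : ℕ) : ZMod 5))
          = (-4 - 3 * z) * eG z (psiG (m : ZMod 5)) := by
        rw [Finset.sum_Ico_eq_sum_range]
        rw [show m + 5 - m = 5 by omega]
        rw [Finset.sum_range_succ, Finset.sum_range_succ, Finset.sum_range_succ,
          Finset.sum_range_succ, Finset.sum_range_succ, Finset.sum_range_zero]
        rw [show m + 5 - (m + 0) = 5 by omega, show m + 5 - (m + 1) = 4 by omega,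
          show m + 5 - (m + 2) = 3 by omega, show m + 5 - (m + 3) = 2 by omega,
          show m + 5 - (m + 4) = 1 by omega]
        rw [cast5, show ((4:ℕ) : ZMod 5) = 4 from by decide,
          show ((3:ℕ) : ZMod 5) = 3 from by decide, show ((2:ℕ) : ZMod 5) = 2 from by decide,
          show ((1:ℕ) : ZMod 5) = 1 from by decide]
        have hc0 : ((m + 0 : ℕ) : ZMod 5) = (m : ZMod 5) := by push_cast; ring
        have hc1 : ((m + 1 : ℕ) : ZMod 5) = (m : ZMod 5) + 1 := by push_cast; ring
        have hc2' : ((m + 2 : ℕ) : ZMod 5) = (m : ZMod 5) + 2 := by push_cast; ring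
        have hc3 : ((m + 3 : ℕ) : ZMod 5) = (m : ZMod 5) + 3 := by push_cast; ring
        have hc4 : ((m + 4 : ℕ) : ZMod 5) = (m : ZMod 5) + 4 := by push_cast; ring
        rw [hc0, hc1, hc2', hc3, hc4]
        have hK := K5e hz (m : ZMod 5)
        linear_combination hK
      rw [hpart1, hpart2, IH m (by omega) hm, hcastm]
      push_cast
      ring

theorem stepB (χ : DirichletCharacter ℂ 5) (n : ℕ) :
    ∑ p ∈ Qset n, χ (p.1 : ZMod 5) * χ (p.2.1 : ZMod 5)
    = ∑ p ∈ (Qset n).filter (fun p => p.2.2.1 = p.2.2.2), Hfun χ p.1 p.2.1 := by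
  have h1 := key1 (fun a b => Hfun χ a b) n
  have h2 : ∀ p ∈ Qset n, χ (p.1 : ZMod 5) * χ (p.2.1 : ZMod 5)
      = Hfun χ p.1 p.2.1 - (if p.1 < p.2.1 then Hfun χ p.1 (p.2.1 - p.1)
          else if p.2.1 < p.1 then Hfun χ (p.1 - p.2.1) p.2.1 else 0) := by
    intro p hp
    rw [mem_Qset] at hp
    obtain ⟨-, ha, hb, -, -⟩ := hp
    conv_rhs => rw [Hfun]
    rw [if_neg (by omega)]
    ring
  rw [Finset.sum_congr rfl h2, Finset.sum_sub_distrib, h1]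
  ring

theorem farkas_quartic_p5_second (χ : DirichletCharacter ℂ 5) (hχ : orderOf χ = 4) (n : ℕ) :
    ∑ j ∈ Finset.range (n + 1), deltaChar χ j * deltaChar χ (n - j)
      = -((4 + 3 * χ 2) / 10) * sigmaTilde (χ ^ 2) (-1 / 5) n
        + ((2 + χ 2) / 2) * sigmaHat (χ ^ 2) n := by
  have hc2 : (χ 2)^2 = -1 := hc2' χ hχ
  have hval : ∀ x : ZMod 5, χ x = eG (χ 2) (chiG x) := chi_eval χ hχ
  have vpsi : ∀ x : ZMod 5, (χ^2) x = eG (χ 2) (psiG x) := by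
    intro x
    rw [pow_two, MulChar.mul_apply, hval x, ← eG_mul hc2, ← K4]
  have w3 : χ 3 = -(χ 2) := by
    rw [hval 3, show chiG 3 = (⟨0,-1⟩:GI) from by decide, eG_bit]; push_cast; ring
  have w4 : χ 4 = -1 := by
    rw [hval 4, show chiG 4 = (⟨-1,0⟩:GI) from by decide, eG_bit]; push_cast; ring
  have hdelta0 : deltaChar χ 0 = (3 + χ 2) / 10 := by
    rw [deltaChar, if_pos rfl]
    rw [Finset.sum_range_succ, Finset.sum_range_succ, Finset.sum_range_succ,
      Finset.sum_range_succ, Finset.sum_range_one]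
    rw [show ((1:ℕ) : ZMod 5) = 1 from by decide,
      show ((2:ℕ) : ZMod 5) = 2 from by decide, show ((3:ℕ) : ZMod 5) = 3 from by decide,
      show ((4:ℕ) : ZMod 5) = 4 from by decide]
    rw [map_one, w3, w4]
    push_cast
    ring
  rcases Nat.eq_zero_or_pos n with rfl | hn
  · rw [Finset.sum_range_one, Nat.sub_self, hdelta0]
    rw [show sigmaTilde (χ^2) (-1/5) 0 = -1/5 from if_pos rfl,
      show sigmaHat (χ^2) 0 = 0 from if_pos rfl]
    linear_combination ((1:ℂ)/100) * hc2
  · -- n ≥ 1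
    have hmid : ∑ j ∈ Ico 1 n, deltaChar χ j * deltaChar χ (n - j)
        = ∑ j ∈ Ico 1 n, (∑ d ∈ Nat.divisors j, χ (d : ZMod 5)) *
            (∑ e ∈ Nat.divisors (n - j), χ (e : ZMod 5)) := by
      refine Finset.sum_congr rfl ?_
      intro j hj
      simp only [mem_Ico] at hj
      rw [deltaChar, if_neg (by omega), deltaChar, if_neg (by omega)]
    have hLHS : ∑ j ∈ range (n+1), deltaChar χ j * deltaChar χ (n - j)
        = deltaChar χ 0 * deltaChar χ n + deltaChar χ n * deltaChar χ 0
          + ∑ j ∈ Ico 1 n, deltaChar χ j * deltaChar χ (n - j) := by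
      rw [Finset.range_eq_Ico, Finset.sum_eq_sum_Ico_succ_bot (by omega)]
      rw [Finset.sum_Ico_succ_top (by omega : 1 ≤ n)]
      rw [Nat.sub_zero, Nat.sub_self]
      ring
    have hchain : ∑ j ∈ Ico 1 n, (∑ d ∈ Nat.divisors j, χ (d : ZMod 5)) *
          (∑ e ∈ Nat.divisors (n - j), χ (e : ZMod 5))
        = ∑ e ∈ n.divisors, ∑ a ∈ Ico 1 e, Hfun χ a (e - a) := by
      rw [conv_eq χ n, stepB χ n, L_D (fun a b => Hfun χ a b) n hn, Finset.sum_sigma]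
    have hHfun : ∀ e ∈ n.divisors, ∀ a ∈ Ico 1 e,
        Hfun χ a (e - a) = eG (χ 2) (BG (a : ZMod 5) ((e - a : ℕ) : ZMod 5)) / 2
          + eG (χ 2) (psiG ((Nat.gcd e a : ℕ) : ZMod 5)) * ((2 + χ 2)/2) := by
      intro e he a ha
      simp only [mem_Ico] at ha
      rw [Hfun_closed χ hc2 hval e a (e - a) (by omega) (by omega) (by omega)]
      have hg : Nat.gcd a (e - a) = Nat.gcd e a := by
        have h1 : Nat.gcd a (e - a) = Nat.gcd a e := by
          conv_rhs => rw [show e = (e - a) + a by omega]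
          rw [Nat.gcd_add_self_right]
        rw [h1, Nat.gcd_comm]
      rw [hg]
    have hinner : ∀ e ∈ n.divisors,
        ∑ a ∈ Ico 1 e, Hfun χ a (e - a)
        = (eG (χ 2) (psiG (e : ZMod 5)) * (-((4 + 3 * χ 2)/5) * (e:ℂ) + (2 + χ 2))
            - ((6 + 2 * χ 2)/5) * eG (χ 2) (chiG (e : ZMod 5))) / 2
          + (∑ d ∈ e.divisors, (Nat.totient (e/d) : ℂ) * eG (χ 2) (psiG (d : ZMod 5))
              - eG (χ 2) (psiG (e : ZMod 5))) * ((2 + χ 2)/2) := by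
      intro e he
      have he1 : 1 ≤ e := Nat.pos_of_mem_divisors he
      rw [Finset.sum_congr rfl (hHfun e he), Finset.sum_add_distrib]
      congr 1
      · rw [← Finset.sum_div, beta_sum hc2 e he1]
      · rw [← Finset.sum_mul]
        congr 1
        have hgs := gcd_sum e (fun d => eG (χ 2) (psiG (d : ZMod 5)))
        have h0 : ∑ a ∈ range e, eG (χ 2) (psiG ((Nat.gcd e a : ℕ) : ZMod 5))
            = eG (χ 2) (psiG ((Nat.gcd e 0 : ℕ) : ZMod 5))
              + ∑ a ∈ Ico 1 e, eG (χ 2) (psiG ((Nat.gcd e a : ℕ) : ZMod 5)) := by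
          rw [Finset.range_eq_Ico, Finset.sum_eq_sum_Ico_succ_bot (by omega)]
        rw [h0, Nat.gcd_zero_right] at hgs
        linear_combination hgs
    have hM : ∑ e ∈ n.divisors, ∑ a ∈ Ico 1 e, Hfun χ a (e - a)
        = -((4 + 3 * χ 2)/10) * (∑ d ∈ n.divisors, eG (χ 2) (psiG (d : ZMod 5)) * (d:ℂ))
          + ((2 + χ 2)/2) *
              (∑ d ∈ n.divisors, eG (χ 2) (psiG (d : ZMod 5)) * ((n/d : ℕ) : ℂ))
          - ((3 + χ 2)/5) * (∑ d ∈ n.divisors, eG (χ 2) (chiG (d : ZMod 5))) := by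
      rw [Finset.sum_congr rfl hinner]
      have expand : ∀ e ∈ n.divisors,
          (eG (χ 2) (psiG (e : ZMod 5)) * (-((4 + 3 * χ 2)/5) * (e:ℂ) + (2 + χ 2))
            - ((6 + 2 * χ 2)/5) * eG (χ 2) (chiG (e : ZMod 5))) / 2
          + (∑ d ∈ e.divisors, (Nat.totient (e/d) : ℂ) * eG (χ 2) (psiG (d : ZMod 5))
              - eG (χ 2) (psiG (e : ZMod 5))) * ((2 + χ 2)/2)
          = (-((4 + 3 * χ 2)/10)) * (eG (χ 2) (psiG (e : ZMod 5)) * (e:ℂ))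
            + (-((3 + χ 2)/5)) * eG (χ 2) (chiG (e : ZMod 5))
            + ((2 + χ 2)/2) *
                (∑ d ∈ e.divisors, (Nat.totient (e/d) : ℂ) * eG (χ 2) (psiG (d : ZMod 5))) := by
        intro e _
        ring
      rw [Finset.sum_congr rfl expand, Finset.sum_add_distrib, Finset.sum_add_distrib,
        ← Finset.mul_sum, ← Finset.mul_sum, ← Finset.mul_sum]
      rw [div_swap (fun d => eG (χ 2) (psiG (d : ZMod 5))) n (by omega)]
      ring
    have hdn : deltaChar χ n = ∑ d ∈ n.divisors, eG (χ 2) (chiG (d : ZMod 5)) := by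
      rw [deltaChar, if_neg (by omega)]
      exact Finset.sum_congr rfl fun d _ => hval _
    rw [hLHS, hmid, hchain, hM, hdelta0, hdn]
    rw [sigmaTilde, if_neg (by omega), sigmaHat, if_neg (by omega)]
    have hT1 : ∑ d ∈ n.divisors, (χ^2) (d : ZMod 5) * (d:ℂ)
        = ∑ d ∈ n.divisors, eG (χ 2) (psiG (d : ZMod 5)) * (d:ℂ) :=
      Finset.sum_congr rfl fun d _ => by rw [vpsi]
    have hT2 : ∑ d ∈ n.divisors, (χ^2) (d : ZMod 5) * ((n/d : ℕ) : ℂ)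
        = ∑ d ∈ n.divisors, eG (χ 2) (psiG (d : ZMod 5)) * ((n/d : ℕ) : ℂ) :=
      Finset.sum_congr rfl fun d _ => by rw [vpsi]
    rw [hT1, hT2]
    ring
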